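/- (Lemma 3.) Let π̃ be the forced-sampling policy with parameter q > 0, so that T_π̃(t) ≥ N(t) for all t. Then for every x > 0 and every t ≥ 1, P( |θ̂_π̃(t) − θ| > x ) ≤ 2 exp( −x² N(t) / (4σ²) ). -/

import Mathlib

open MeasureTheory ProbabilityTheory

noncomputable section

namespace OneArmedBandit

/-- The model of Woodroofe's one-armed bandit problem with covariates: the covariates
`X_t` are i.i.d. with common law `PX`, the noise variables `ε_t` are i.i.d. centered
Gaussian with variance `σ²`, and all these random variables are mutually independent
under the probability measure `P`. -/
structure Model (Ω : Type) [MeasurableSpace Ω] where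
  P : Measure Ω
  isProb : IsProbabilityMeasure P
  X : ℕ → Ω → ℝ
  eps : ℕ → Ω → ℝ
  σ : ℝ
  σ_pos : 0 < σ
  PX : Measure ℝ
  PX_prob : IsProbabilityMeasure PX
  meas_X : ∀ t, Measurable (X t)
  meas_eps : ∀ t, Measurable (eps t)
  law_X : ∀ t, P.map (X t) = PX
  law_eps : ∀ t, P.map (eps t) = gaussianReal 0 ⟨σ ^ 2, sq_nonneg σ⟩
  indep : iIndepFun (Sum.elim X eps) P

variable {Ω : Type} [MeasurableSpace Ω]

/-- The reward of arm 1 at time `t`: `Y_t = X_t − θ + ε_t` (arm 0 yields reward 0). -/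
def Model.Y (M : Model Ω) (θ : ℝ) (t : ℕ) (ω : Ω) : ℝ := M.X t ω - θ + M.eps t ω

/-- `T_π(t) = ∑_{s=1}^t π_s`, the number of pulls of arm 1 up to time `t`. -/
def Tpulls (π : ℕ → Ω → ℝ) (t : ℕ) (ω : Ω) : ℝ := ∑ s ∈ Finset.Icc 1 t, π s ω

/-- The estimator `θ̂_π(t) = T_π(t)⁻¹ ∑_{s=1}^t (X_s − Y_s) π_s`. -/
def thetaHat (M : Model Ω) (θ : ℝ) (π : ℕ → Ω → ℝ) (t : ℕ) (ω : Ω) : ℝ :=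
  (Tpulls π t ω)⁻¹ * ∑ s ∈ Finset.Icc 1 t, (M.X s ω - M.Y θ s ω) * π s ω

/-- `F⁺_t = σ(X_1,…,X_t,X_{t+1}; π_1,…,π_t; π_1Y_1,…,π_tY_t)`. -/
def Fplus (M : Model Ω) (θ : ℝ) (π : ℕ → Ω → ℝ) (t : ℕ) : MeasurableSpace Ω :=
  (⨆ s ∈ Finset.Icc 1 (t + 1), MeasurableSpace.comap (M.X s) inferInstance) ⊔
  (⨆ s ∈ Finset.Icc 1 t, MeasurableSpace.comap (π s) inferInstance) ⊔
  (⨆ s ∈ Finset.Icc 1 t, MeasurableSpace.comap (fun ω => π s ω * M.Y θ s ω) inferInstance)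

/-- `F_t = σ(X_1,…,X_t; π_1,…,π_t; π_1Y_1,…,π_tY_t)`. -/
def Ffilt (M : Model Ω) (θ : ℝ) (π : ℕ → Ω → ℝ) (t : ℕ) : MeasurableSpace Ω :=
  (⨆ s ∈ Finset.Icc 1 t, MeasurableSpace.comap (M.X s) inferInstance) ⊔
  (⨆ s ∈ Finset.Icc 1 t, MeasurableSpace.comap (π s) inferInstance) ⊔
  (⨆ s ∈ Finset.Icc 1 t, MeasurableSpace.comap (fun ω => π s ω * M.Y θ s ω) inferInstance)

/-- A policy: a `{0,1}`-valued sequence of random variables, `π_t` being measurable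
with respect to `F⁺_{t−1}`. -/
structure IsPolicy (M : Model Ω) (θ : ℝ) (π : ℕ → Ω → ℝ) : Prop where
  vals : ∀ t ω, π t ω = 0 ∨ π t ω = 1
  adapted : ∀ t, 1 ≤ t → Measurable[Fplus M θ π (t - 1)] (π t)

/-- The oracle policy `π*_t = I{X_t ≥ θ}`. -/
def oracle (M : Model Ω) (θ : ℝ) (t : ℕ) (ω : Ω) : ℝ := if θ ≤ M.X t ω then 1 else 0

/-- The inferior sampling rate `S_n(π, π*) = ∑_{t=1}^n P(π_t ≠ π*_t)`. -/
def Srate (M : Model Ω) (θ : ℝ) (π : ℕ → Ω → ℝ) (n : ℕ) : ℝ :=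
  ∑ t ∈ Finset.Icc 1 n, (M.P {ω | π t ω ≠ oracle M θ t ω}).toReal

/-- The regret `R_n(π, π*) = E ∑_{t=1}^n |X_t − θ| I{π_t ≠ π*_t}`. -/
def Regret (M : Model Ω) (θ : ℝ) (π : ℕ → Ω → ℝ) (n : ℕ) : ℝ :=
  ∫ ω, (∑ t ∈ Finset.Icc 1 n,
    |M.X t ω - θ| * (if π t ω ≠ oracle M θ t ω then 1 else 0)) ∂M.P

/-- `(θ, P_X)` belongs to the class `𝒫_α` with constants `C_*, x₀, p`. -/
structure InClass (PX : Measure ℝ) (θ Cstar x0 p α : ℝ) : Prop where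
  margin : ∀ x ∈ Set.Ioc (0 : ℝ) x0, (PX (Set.Icc (θ - x) (θ + x))).toReal ≤ Cstar * x ^ α
  p_le : p ≤ (PX (Set.Ici θ)).toReal
  lt_one : (PX (Set.Ici θ)).toReal < 1

/-- `(θ, P_X)` belongs to the class `𝒫'_α`: additionally `∫ |x − θ| P_X(dx) ≤ μ`. -/
structure InClass' (PX : Measure ℝ) (θ Cstar x0 p α μ : ℝ)
    extends InClass PX θ Cstar x0 p α : Prop where
  moment : ∫ x, |x - θ| ∂PX ≤ μ

end OneArmedBandit
namespace OneArmedBandit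

variable {Ω : Type} [MeasurableSpace Ω]

/-- The forced sampling instants: `τ_1 = 1`, `τ_t = ⌊e^{qt}⌋` for `t ≥ 2`. -/
def tauFS (q : ℝ) (t : ℕ) : ℕ := if t = 1 then 1 else Nat.floor (Real.exp (q * t))

/-- `𝒯`: the set of distinct values of the sequence `(τ_t)_{t ≥ 1}`. -/
def forcedTimes (q : ℝ) : Set ℕ := {m | ∃ t, 1 ≤ t ∧ tauFS q t = m}

/-- `N(t)`: the number of elements of `𝒯` that are `≤ t`. -/
def Ncount (q : ℝ) (t : ℕ) : ℕ := (forcedTimes q ∩ Set.Iic t).ncard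

/-- `π` is the forced-sampling policy with design parameter `q`: it pulls arm 1 at all
instants in `𝒯`, and acts myopically in between. -/
structure IsForced (M : Model Ω) (θ : ℝ) (q : ℝ) (π : ℕ → Ω → ℝ) : Prop where
  forced : ∀ t ω, t ∈ forcedTimes q → π t ω = 1
  myopic : ∀ t ω, 1 ≤ t → t ∉ forcedTimes q →
    π t ω = if thetaHat M θ π (t - 1) ω ≤ M.X t ω then 1 else 0

/-- `ν = 1 + q⁻¹ ln₊(2/(e^q − 1))`. -/
def nuFS (q : ℝ) : ℝ := 1 + q⁻¹ * max (Real.log (2 / (Real.exp q - 1))) 0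

/-- `ν₀ = max{ν, min{t : t ≥ 2q⁻¹ ln(t+1)}}`. -/
def nu0 (q : ℝ) : ℝ :=
  max (nuFS q) ((sInf {t : ℕ | 2 * q⁻¹ * Real.log ((t : ℝ) + 1) ≤ (t : ℝ)} : ℕ) : ℝ)

/-- `ϰ_α = (α/2)^{α/2} (1 − 2^{−α})^{−1} + Γ(α/2)/(2 ln 2)`. -/
def kappaFS (α : ℝ) : ℝ :=
  (α / 2) ^ (α / 2) * (1 - (2 : ℝ) ^ (-α))⁻¹ + Real.Gamma (α / 2) / (2 * Real.log 2)

end OneArmedBandit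

namespace OneArmedBandit


section Aux

open MeasureTheory ProbabilityTheory MeasurableSpace
open scoped NNReal ENNReal

variable {Ω : Type} [MeasurableSpace Ω]

/-- History σ-algebra: generated by `X_1,…,X_{n+1}` and `ε_1,…,ε_n`. -/
def Hist (M : Model Ω) (n : ℕ) : MeasurableSpace Ω :=
  (⨆ s ∈ Finset.Icc 1 (n + 1), MeasurableSpace.comap (M.X s) inferInstance) ⊔
  (⨆ s ∈ Finset.Icc 1 n, MeasurableSpace.comap (M.eps s) inferInstance)

lemma hist_le (M : Model Ω) (n : ℕ) : Hist M n ≤ ‹MeasurableSpace Ω› := by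
  apply sup_le
  · exact iSup₂_le fun s _ => measurable_iff_comap_le.mp (M.meas_X s)
  · exact iSup₂_le fun s _ => measurable_iff_comap_le.mp (M.meas_eps s)

lemma hist_mono (M : Model Ω) {n m : ℕ} (h : n ≤ m) : Hist M n ≤ Hist M m := by
  apply sup_le_sup
  · exact iSup₂_le fun s hs => le_iSup₂_of_le s
      (Finset.mem_Icc.mpr ⟨(Finset.mem_Icc.mp hs).1, le_trans (Finset.mem_Icc.mp hs).2 (by omega)⟩)
      le_rfl
  · exact iSup₂_le fun s hs => le_iSup₂_of_le s
      (Finset.mem_Icc.mpr ⟨(Finset.mem_Icc.mp hs).1, le_trans (Finset.mem_Icc.mp hs).2 h⟩) le_rfl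

lemma meas_hist_X (M : Model Ω) {n s : ℕ} (hs1 : 1 ≤ s) (hs : s ≤ n + 1) :
    Measurable[Hist M n] (M.X s) :=
  Measurable.of_comap_le (le_trans
    (le_iSup₂_of_le s (Finset.mem_Icc.mpr ⟨hs1, hs⟩) le_rfl) le_sup_left)

lemma meas_hist_eps (M : Model Ω) {n s : ℕ} (hs1 : 1 ≤ s) (hs : s ≤ n) :
    Measurable[Hist M n] (M.eps s) :=
  Measurable.of_comap_le (le_trans
    (le_iSup₂_of_le s (Finset.mem_Icc.mpr ⟨hs1, hs⟩) le_rfl) le_sup_right)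

lemma fplus_le_hist (M : Model Ω) (θ : ℝ) (π : ℕ → Ω → ℝ) (hπ : IsPolicy M θ π) :
    ∀ n, Fplus M θ π n ≤ Hist M n := by
  intro n
  induction n using Nat.strong_induction_on with
  | _ n ih =>
    have hpi : ∀ s, 1 ≤ s → s ≤ n → Measurable[Hist M n] (π s) := by
      intro s hs1 hsn
      refine (hπ.adapted s hs1).mono (le_trans (ih (s - 1) (by omega)) (hist_mono M (by omega)))
        le_rfl
    have hpiY : ∀ s, 1 ≤ s → s ≤ n →
        Measurable[Hist M n] (fun ω => π s ω * M.Y θ s ω) := by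
      intro s hs1 hsn
      exact (hpi s hs1 hsn).mul
        (((meas_hist_X M hs1 (by omega)).sub measurable_const).add (meas_hist_eps M hs1 hsn))
    refine sup_le (sup_le le_sup_left ?_) ?_
    · exact iSup₂_le fun s hs =>
        measurable_iff_comap_le.mp (hpi s (Finset.mem_Icc.mp hs).1 (Finset.mem_Icc.mp hs).2)
    · exact iSup₂_le fun s hs =>
        measurable_iff_comap_le.mp (hpiY s (Finset.mem_Icc.mp hs).1 (Finset.mem_Icc.mp hs).2)

lemma meas_pi (M : Model Ω) {θ : ℝ} {π : ℕ → Ω → ℝ} (hπ : IsPolicy M θ π) {s : ℕ}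
    (hs : 1 ≤ s) : Measurable (π s) :=
  ((hπ.adapted s hs).mono (le_trans (fplus_le_hist M θ π hπ (s - 1)) (hist_le M (s - 1))) le_rfl)


lemma gaussianPDFReal_complete_sq (v : ℝ≥0) (hv : v ≠ 0) (l y : ℝ) :
    gaussianPDFReal 0 v y * Real.exp (l * y) =
      Real.exp (l ^ 2 * v / 2) * gaussianPDFReal (l * v) v y := by
  have hv0 : (0 : ℝ) < (v : ℝ) := by positivity
  simp only [gaussianPDFReal]
  rw [mul_assoc, ← Real.exp_add]
  have h : -(y - 0) ^ 2 / (2 * (v : ℝ)) + l * y =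
      l ^ 2 * (v : ℝ) / 2 + -(y - l * (v : ℝ)) ^ 2 / (2 * (v : ℝ)) := by
    field_simp
    ring
  rw [h, Real.exp_add]
  ring

lemma lintegral_exp_gaussianReal (v : ℝ≥0) (hv : v ≠ 0) (l : ℝ) :
    ∫⁻ y, ENNReal.ofReal (Real.exp (l * y)) ∂(gaussianReal 0 v) =
      ENNReal.ofReal (Real.exp (l ^ 2 * v / 2)) := by
  rw [gaussianReal_of_var_ne_zero 0 hv,
    lintegral_withDensity_eq_lintegral_mul _ (measurable_gaussianPDF 0 v)
      (by exact ENNReal.measurable_ofReal.comp (Real.measurable_exp.comp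
        (measurable_const.mul measurable_id)))]
  have : ∀ y : ℝ, (gaussianPDF 0 v * fun y => ENNReal.ofReal (Real.exp (l * y))) y =
      ENNReal.ofReal (Real.exp (l ^ 2 * v / 2)) * gaussianPDF (l * v) v y := by
    intro y
    simp only [Pi.mul_apply, gaussianPDF]
    rw [← ENNReal.ofReal_mul (gaussianPDFReal_nonneg 0 v y),
      ← ENNReal.ofReal_mul (Real.exp_nonneg _), gaussianPDFReal_complete_sq v hv l y]
  simp_rw [this]
  rw [lintegral_const_mul _ (measurable_gaussianPDF _ v), lintegral_gaussianPDF_eq_one _ hv,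
    mul_one]

lemma lintegral_exp_eps (M : Model Ω) (t : ℕ) (l : ℝ) :
    ∫⁻ ω, ENNReal.ofReal (Real.exp (l * M.eps t ω)) ∂M.P =
      ENNReal.ofReal (Real.exp (l ^ 2 * M.σ ^ 2 / 2)) := by
  have h := lintegral_map (μ := M.P) (f := fun y : ℝ => ENNReal.ofReal (Real.exp (l * y)))
    (by exact ENNReal.measurable_ofReal.comp (Real.measurable_exp.comp
      (measurable_const.mul measurable_id))) (M.meas_eps t)
  rw [M.law_eps t] at h
  rw [← h]
  refine (lintegral_exp_gaussianReal (⟨M.σ ^ 2, sq_nonneg M.σ⟩ : ℝ≥0) (fun h0 => (pow_pos M.σ_pos 2).ne' (congrArg NNReal.toReal h0)) l).trans ?_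
  rfl


/-- σ-algebra generated by all the `X`'s and all the `ε`'s except `ε_u`. -/
def GSig (M : Model Ω) (u : ℕ) : MeasurableSpace Ω :=
  ⨆ i ∈ ({Sum.inr u}ᶜ : Set (ℕ ⊕ ℕ)), MeasurableSpace.comap (Sum.elim M.X M.eps i) inferInstance

lemma meas_elim (M : Model Ω) (i : ℕ ⊕ ℕ) : Measurable (Sum.elim M.X M.eps i) := by
  cases i with
  | inl s => exact M.meas_X s
  | inr s => exact M.meas_eps s

lemma gsig_le (M : Model Ω) (u : ℕ) : GSig M u ≤ ‹MeasurableSpace Ω› :=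
  iSup₂_le fun i _ => measurable_iff_comap_le.mp (meas_elim M i)

lemma indep_gsig (M : Model Ω) (u : ℕ) :
    Indep (GSig M u) (MeasurableSpace.comap (M.eps u) inferInstance) M.P := by
  have h := indep_iSup_of_disjoint
    (m := fun i : ℕ ⊕ ℕ => MeasurableSpace.comap (Sum.elim M.X M.eps i) inferInstance)
    (fun i => measurable_iff_comap_le.mp (meas_elim M i)) M.indep.iIndep
    (S := ({Sum.inr u}ᶜ : Set (ℕ ⊕ ℕ))) (T := {Sum.inr u}) disjoint_compl_left
  have hsingle : (⨆ i ∈ ({Sum.inr u} : Set (ℕ ⊕ ℕ)),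
      MeasurableSpace.comap (Sum.elim M.X M.eps i) inferInstance) =
      MeasurableSpace.comap (M.eps u) inferInstance := by
    simp
  rwa [hsingle] at h

lemma hist_le_gsig (M : Model Ω) {n u : ℕ} (h : n < u) : Hist M n ≤ GSig M u := by
  apply sup_le
  · refine iSup₂_le fun s _ => ?_
    exact le_iSup₂_of_le (Sum.inl s) (by simp) (le_of_eq rfl)
  · refine iSup₂_le fun s hs => ?_
    have hsn : s ≤ n := (Finset.mem_Icc.mp hs).2
    exact le_iSup₂_of_le (Sum.inr s) (by simp; omega) (le_of_eq rfl)

lemma lintegral_mul_eps (M : Model Ω) (u : ℕ) {f : Ω → ℝ≥0∞} (hf : Measurable[GSig M u] f)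
    {φ : ℝ → ℝ≥0∞} (hφ : Measurable φ) :
    ∫⁻ ω, f ω * φ (M.eps u ω) ∂M.P = (∫⁻ ω, f ω ∂M.P) * ∫⁻ ω, φ (M.eps u ω) ∂M.P :=
  lintegral_mul_eq_lintegral_mul_lintegral_of_independent_measurableSpace
    (gsig_le M u) (measurable_iff_comap_le.mp (M.meas_eps u)) (indep_gsig M u) hf
    (hφ.comp (Measurable.of_comap_le le_rfl))

lemma meas_hist_pi (M : Model Ω) {θ : ℝ} {π : ℕ → Ω → ℝ} (hπ : IsPolicy M θ π) {s n : ℕ}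
    (hs1 : 1 ≤ s) (hsn : s ≤ n + 1) : Measurable[Hist M n] (π s) :=
  (hπ.adapted s hs1).mono
    (le_trans (fplus_le_hist M θ π hπ (s - 1)) (hist_mono M (by omega))) le_rfl

lemma key_supermart (M : Model Ω) (θ : ℝ) (π : ℕ → Ω → ℝ) (hπ : IsPolicy M θ π) (l : ℝ) :
    ∀ t : ℕ, ∫⁻ ω, ENNReal.ofReal (Real.exp (l * (∑ s ∈ Finset.Icc 1 t, M.eps s ω * π s ω)
      - l ^ 2 * M.σ ^ 2 / 2 * Tpulls π t ω)) ∂M.P = 1 := by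
  haveI := M.isProb
  have hπ01 : ∀ s ω, 0 ≤ π s ω ∧ π s ω ≤ 1 := by
    intro s ω; rcases hπ.vals s ω with h | h <;> simp [h]
  intro t
  induction t with
  | zero => simp [Tpulls]
  | succ t ih =>
    have hc : (0:ℝ) ≤ l ^ 2 * M.σ ^ 2 / 2 := by positivity
    set c : ℝ := l ^ 2 * M.σ ^ 2 / 2 with hcdef
    set A : Ω → ℝ := fun ω =>
      Real.exp (l * (∑ s ∈ Finset.Icc 1 t, M.eps s ω * π s ω) - c * Tpulls π t ω) with hAdef
    -- measurability w.r.t. `Hist M t`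
    have hS : Measurable[Hist M t] (fun ω => ∑ s ∈ Finset.Icc 1 t, M.eps s ω * π s ω) := by
      refine Finset.measurable_sum _ fun s hs => ?_
      have hs2 := (Finset.mem_Icc.mp hs).2
      exact (meas_hist_eps M (Finset.mem_Icc.mp hs).1 hs2).mul
        (meas_hist_pi M hπ (Finset.mem_Icc.mp hs).1 (by omega))
    have hTm : Measurable[Hist M t] (Tpulls π t) := by
      refine Finset.measurable_sum _ fun s hs => ?_
      have hs2 := (Finset.mem_Icc.mp hs).2
      exact meas_hist_pi M hπ (Finset.mem_Icc.mp hs).1 (by omega)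
    have hAm : Measurable[Hist M t] A := by
      exact Real.measurable_exp.comp ((measurable_const.mul hS).sub (measurable_const.mul hTm))
    have hπm : Measurable[Hist M t] (π (t + 1)) := meas_hist_pi M hπ (by omega) le_rfl
    have hHle : Hist M t ≤ ‹MeasurableSpace Ω› := hist_le M t
    have hAm' : Measurable A := hAm.mono hHle le_rfl
    have hπm' : Measurable (π (t + 1)) := hπm.mono hHle le_rfl
    -- pointwise splitting
    have hpt : ∀ ω, ENNReal.ofReal (Real.exp (l * (∑ s ∈ Finset.Icc 1 (t + 1),
          M.eps s ω * π s ω) - c * Tpulls π (t + 1) ω)) =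
        ENNReal.ofReal (A ω * (1 - π (t + 1) ω)) +
        ENNReal.ofReal ((A ω * π (t + 1) ω) * Real.exp (l * M.eps (t + 1) ω - c)) := by
      intro ω
      have hsum : (∑ s ∈ Finset.Icc 1 (t + 1), M.eps s ω * π s ω) =
          (∑ s ∈ Finset.Icc 1 t, M.eps s ω * π s ω) + M.eps (t + 1) ω * π (t + 1) ω :=
        Finset.sum_Icc_succ_top (by omega) _
      have hT : Tpulls π (t + 1) ω = Tpulls π t ω + π (t + 1) ω :=
        Finset.sum_Icc_succ_top (by omega) _
      rw [hsum, hT]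
      rcases hπ.vals (t + 1) ω with h | h
      · simp [h, hAdef]
      · rw [h]
        have harg : l * ((∑ s ∈ Finset.Icc 1 t, M.eps s ω * π s ω) + M.eps (t + 1) ω * 1)
            - c * (Tpulls π t ω + 1) =
            (l * (∑ s ∈ Finset.Icc 1 t, M.eps s ω * π s ω) - c * Tpulls π t ω)
            + (l * M.eps (t + 1) ω - c) := by ring
        rw [harg, Real.exp_add]
        simp [hAdef]
    rw [lintegral_congr hpt]
    have hmeas1 : Measurable (fun ω => ENNReal.ofReal (A ω * (1 - π (t + 1) ω))) :=
      ENNReal.measurable_ofReal.comp (hAm'.mul (measurable_const.sub hπm'))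
    rw [lintegral_add_left hmeas1]
    -- second term: independence
    have hsplit : ∀ ω, ENNReal.ofReal ((A ω * π (t + 1) ω) * Real.exp (l * M.eps (t + 1) ω - c)) =
        (fun ω => ENNReal.ofReal (A ω * π (t + 1) ω)) ω *
        (fun y => ENNReal.ofReal (Real.exp (l * y - c))) (M.eps (t + 1) ω) := by
      intro ω
      exact ENNReal.ofReal_mul (mul_nonneg (Real.exp_nonneg _) (hπ01 (t + 1) ω).1)
    have hf : Measurable[GSig M (t + 1)] (fun ω => ENNReal.ofReal (A ω * π (t + 1) ω)) :=
      (ENNReal.measurable_ofReal.comp (hAm.mul hπm)).mono (hist_le_gsig M (Nat.lt_succ_self t))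
        le_rfl
    have hφ : Measurable (fun y : ℝ => ENNReal.ofReal (Real.exp (l * y - c))) :=
      ENNReal.measurable_ofReal.comp
        (Real.measurable_exp.comp ((measurable_const.mul measurable_id).sub measurable_const))
    rw [lintegral_congr hsplit, lintegral_mul_eps M (t + 1) hf hφ]
    -- the Gaussian factor integrates to 1
    have hgauss : ∫⁻ ω, (fun y : ℝ => ENNReal.ofReal (Real.exp (l * y - c))) (M.eps (t + 1) ω)
        ∂M.P = 1 := by
      have h1 : ∀ ω, (fun y : ℝ => ENNReal.ofReal (Real.exp (l * y - c))) (M.eps (t + 1) ω) =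
          ENNReal.ofReal (Real.exp (l * M.eps (t + 1) ω)) * ENNReal.ofReal (Real.exp (-c)) := by
        intro ω
        rw [← ENNReal.ofReal_mul (Real.exp_nonneg _), ← Real.exp_add]
        ring_nf
      have hm : Measurable (fun ω => ENNReal.ofReal (Real.exp (l * M.eps (t + 1) ω))) :=
        ENNReal.measurable_ofReal.comp (Real.measurable_exp.comp
          (measurable_const.mul (M.meas_eps (t + 1))))
      rw [lintegral_congr h1, lintegral_mul_const _ hm, lintegral_exp_eps M (t + 1) l,
        ← ENNReal.ofReal_mul (Real.exp_nonneg _), ← Real.exp_add, hcdef]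
      norm_num
    rw [hgauss, mul_one]
    -- recombine
    have hmeas2 : Measurable (fun ω => ENNReal.ofReal (A ω * π (t + 1) ω)) :=
      ENNReal.measurable_ofReal.comp (hAm'.mul hπm')
    rw [← lintegral_add_left hmeas1]
    have hmerge : ∀ ω, ENNReal.ofReal (A ω * (1 - π (t + 1) ω)) +
        ENNReal.ofReal (A ω * π (t + 1) ω) = ENNReal.ofReal (A ω) := by
      intro ω
      rw [← ENNReal.ofReal_add (mul_nonneg (Real.exp_nonneg _)
        (by linarith [(hπ01 (t + 1) ω).2])) (mul_nonneg (Real.exp_nonneg _) (hπ01 (t + 1) ω).1)]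
      congr 1
      simp only [hAdef]
      ring
    rw [lintegral_congr hmerge]
    exact ih


lemma chernoff_side (M : Model Ω) (θ : ℝ) (π : ℕ → Ω → ℝ) (hπ : IsPolicy M θ π) (t : ℕ)
    (x ν : ℝ) (hx : 0 < x) (hν : 0 ≤ ν) (hνT : ∀ ω, ν ≤ Tpulls π t ω) (e : ℝ)
    (he : e = 1 ∨ e = -1) :
    M.P {ω | x * Tpulls π t ω < e * ∑ s ∈ Finset.Icc 1 t, M.eps s ω * π s ω} ≤
      ENNReal.ofReal (Real.exp (-(x ^ 2 * ν) / (2 * M.σ ^ 2))) := by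
  haveI := M.isProb
  have hπ01 : ∀ s ω, 0 ≤ π s ω ∧ π s ω ≤ 1 := by
    intro s ω; rcases hπ.vals s ω with h | h <;> simp [h]
  have hσ2 : (0 : ℝ) < M.σ ^ 2 := pow_pos M.σ_pos 2
  set l : ℝ := e * x / M.σ ^ 2 with hldef
  have hSm : Measurable (fun ω => ∑ s ∈ Finset.Icc 1 t, M.eps s ω * π s ω) := by
    refine Finset.measurable_sum _ fun s hs => ?_
    exact (M.meas_eps s).mul (meas_pi M hπ (Finset.mem_Icc.mp hs).1)
  have hTm : Measurable (Tpulls π t) := by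
    refine Finset.measurable_sum _ fun s hs => ?_
    exact meas_pi M hπ (Finset.mem_Icc.mp hs).1
  have hEm : MeasurableSet {ω | x * Tpulls π t ω < e *
      ∑ s ∈ Finset.Icc 1 t, M.eps s ω * π s ω} :=
    measurableSet_lt (measurable_const.mul hTm) (measurable_const.mul hSm)
  have hkey := key_supermart M θ π hπ l t
  rw [← lintegral_indicator_one hEm]
  have hmono : ∀ ω, ({ω | x * Tpulls π t ω < e *
        ∑ s ∈ Finset.Icc 1 t, M.eps s ω * π s ω}.indicator (fun _ => (1 : ℝ≥0∞))) ω ≤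
      ENNReal.ofReal (Real.exp (-(x ^ 2 * ν) / (2 * M.σ ^ 2))) *
      ENNReal.ofReal (Real.exp (l * (∑ s ∈ Finset.Icc 1 t, M.eps s ω * π s ω)
        - l ^ 2 * M.σ ^ 2 / 2 * Tpulls π t ω)) := by
    intro ω
    by_cases hω : ω ∈ {ω | x * Tpulls π t ω < e *
        ∑ s ∈ Finset.Icc 1 t, M.eps s ω * π s ω}
    · rw [Set.indicator_of_mem hω]
      rw [← ENNReal.ofReal_mul (Real.exp_nonneg _), ← Real.exp_add]
      refine ENNReal.one_le_ofReal.mpr (Real.one_le_exp ?_)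
      have hev : x * Tpulls π t ω < e * ∑ s ∈ Finset.Icc 1 t, M.eps s ω * π s ω := hω
      have he2 : e ^ 2 = 1 := by rcases he with rfl | rfl <;> norm_num
      have hl2 : l ^ 2 * M.σ ^ 2 / 2 = x ^ 2 / (2 * M.σ ^ 2) := by
        rw [hldef, div_pow, mul_pow, he2, one_mul]
        field_simp
      have hlS : l * (∑ s ∈ Finset.Icc 1 t, M.eps s ω * π s ω) =
          (x / M.σ ^ 2) * (e * ∑ s ∈ Finset.Icc 1 t, M.eps s ω * π s ω) := by
        rw [hldef]; ring
      have hT := hνT ω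
      rw [hlS, hl2]
      set d : ℝ := e * ∑ s ∈ Finset.Icc 1 t, M.eps s ω * π s ω
      set T' : ℝ := Tpulls π t ω
      have expand : -(x ^ 2 * ν) / (2 * M.σ ^ 2) + (x / M.σ ^ 2 * d - x ^ 2 / (2 * M.σ ^ 2) * T')
          = (2 * (x * d) - x ^ 2 * T' - x ^ 2 * ν) / (2 * M.σ ^ 2) := by
        field_simp
        ring
      rw [expand]
      apply div_nonneg _ (by positivity)
      nlinarith [mul_lt_mul_of_pos_left hev hx, mul_nonneg (sq_nonneg x) (sub_nonneg.mpr hT)]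
    · rw [Set.indicator_of_notMem hω]
      exact zero_le
  refine le_trans (lintegral_mono hmono) ?_
  rw [lintegral_const_mul _ (by
    exact ENNReal.measurable_ofReal.comp (Real.measurable_exp.comp
      ((measurable_const.mul hSm).sub (measurable_const.mul hTm)))), hkey, mul_one]

end Aux




/-- Lemma 3: for the forced-sampling policy `π̃` with parameter `q > 0`, for every
`x > 0` and every `t ≥ 1`, `P(|θ̂_π̃(t) − θ| > x) ≤ 2 exp(−x² N(t)/(4σ²))`. -/
theorem lemma3_forced_tail (Ω : Type) [MeasurableSpace Ω] (M : Model Ω) (θ q : ℝ)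
    (hq : 0 < q) (π : ℕ → Ω → ℝ) (hπ : IsPolicy M θ π) (hf : IsForced M θ q π)
    (x : ℝ) (hx : 0 < x) (t : ℕ) (ht : 1 ≤ t) :
    (M.P {ω | x < |thetaHat M θ π t ω - θ|}).toReal ≤
      2 * Real.exp (-(x ^ 2 * (Ncount q t : ℝ)) / (4 * M.σ ^ 2)) := by
  classical
  haveI := M.isProb
  have hπ01 : ∀ s ω, 0 ≤ π s ω ∧ π s ω ≤ 1 := by
    intro s ω; rcases hπ.vals s ω with h | h <;> simp [h]
  have hσ2 : (0 : ℝ) < M.σ ^ 2 := pow_pos M.σ_pos 2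
  -- every forced time is at least 1
  have hforced_ge : ∀ m ∈ forcedTimes q, 1 ≤ m := by
    rintro m ⟨s, hs1, rfl⟩
    unfold tauFS
    split
    · exact le_rfl
    · refine Nat.le_floor ?_
      rw [Nat.cast_one]
      exact Real.one_le_exp (by positivity)
  -- N(t) = card of forced times in [1, t]
  set F : Finset ℕ := (Finset.Icc 1 t).filter (fun m => m ∈ forcedTimes q) with hFdef
  have hNF : Ncount q t = F.card := by
    rw [Ncount, show forcedTimes q ∩ Set.Iic t = (F : Set ℕ) from ?_, Set.ncard_coe_finset]
    ext m
    simp only [hFdef, Set.mem_inter_iff, Set.mem_Iic, Finset.coe_filter, Finset.mem_Icc,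
      Set.mem_setOf_eq]
    exact ⟨fun ⟨h1, h2⟩ => ⟨⟨hforced_ge m h1, h2⟩, h1⟩, fun ⟨⟨_, h2⟩, h1⟩ => ⟨h1, h2⟩⟩
  -- T ≥ N(t)
  have hνT : ∀ ω, (Ncount q t : ℝ) ≤ Tpulls π t ω := by
    intro ω
    rw [hNF]
    have hcard : (F.card : ℝ) = ∑ s ∈ F, π s ω := by
      rw [Finset.sum_congr rfl (fun s hs => hf.forced s ω (Finset.mem_filter.mp hs).2)]
      simp
      rfl
    rw [hcard]
    exact Finset.sum_le_sum_of_subset_of_nonneg (Finset.filter_subset _ _)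
      (fun s _ _ => (hπ01 s ω).1)
  -- T ≥ 1, so T > 0
  have h1F : (1 : ℕ) ∈ forcedTimes q := ⟨1, le_rfl, by simp [tauFS]⟩
  have hT1 : ∀ ω, (1 : ℝ) ≤ Tpulls π t ω := by
    intro ω
    have h := Finset.single_le_sum (f := fun s => π s ω) (fun s _ => (hπ01 s ω).1)
      (Finset.mem_Icc.mpr ⟨le_rfl, ht⟩)
    have h2 : π 1 ω ≤ Tpulls π t ω := h
    rw [hf.forced 1 ω h1F] at h2
    exact h2
  -- event inclusion
  have hincl : {ω | x < |thetaHat M θ π t ω - θ|} ⊆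
      {ω | x * Tpulls π t ω < 1 * ∑ s ∈ Finset.Icc 1 t, M.eps s ω * π s ω} ∪
      {ω | x * Tpulls π t ω < (-1) * ∑ s ∈ Finset.Icc 1 t, M.eps s ω * π s ω} := by
    intro ω hω
    have hTpos : (0 : ℝ) < Tpulls π t ω := lt_of_lt_of_le one_pos (hT1 ω)
    set S : ℝ := ∑ s ∈ Finset.Icc 1 t, M.eps s ω * π s ω with hSdef
    have hθ : thetaHat M θ π t ω - θ = -(S / Tpulls π t ω) := by
      rw [thetaHat]
      have hXY : ∀ s ∈ Finset.Icc 1 t, (M.X s ω - M.Y θ s ω) * π s ω =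
          θ * π s ω - M.eps s ω * π s ω := by
        intro s _
        simp only [Model.Y]
        ring
      rw [Finset.sum_congr rfl hXY, Finset.sum_sub_distrib, ← Finset.mul_sum]
      have hTsum : (∑ s ∈ Finset.Icc 1 t, π s ω) = Tpulls π t ω := rfl
      rw [hTsum, ← hSdef]
      field_simp
      ring
    have hx' : x * Tpulls π t ω < |S| := by
      have hω' : x < |thetaHat M θ π t ω - θ| := hω
      have : x < |S| / Tpulls π t ω := by
        rwa [hθ, abs_neg, abs_div, abs_of_pos hTpos] at hω'

      exact (lt_div_iff₀ hTpos).mp this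
    rcases le_or_gt 0 S with hS0 | hS0
    · left
      rw [Set.mem_setOf_eq, one_mul]
      rwa [abs_of_nonneg hS0] at hx'
    · right
      rw [Set.mem_setOf_eq, neg_one_mul]
      rwa [abs_of_neg hS0] at hx'
  -- Chernoff bounds on both sides
  have hN0 : (0 : ℝ) ≤ (Ncount q t : ℝ) := Nat.cast_nonneg _
  have hside1 := chernoff_side M θ π hπ t x _ hx hN0 hνT 1 (Or.inl rfl)
  have hside2 := chernoff_side M θ π hπ t x _ hx hN0 hνT (-1) (Or.inr rfl)
  have hbound : M.P {ω | x < |thetaHat M θ π t ω - θ|} ≤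
      ENNReal.ofReal (2 * Real.exp (-(x ^ 2 * (Ncount q t : ℝ)) / (2 * M.σ ^ 2))) := by
    refine le_trans (measure_mono hincl) (le_trans (measure_union_le _ _) ?_)
    rw [two_mul, ENNReal.ofReal_add (Real.exp_nonneg _) (Real.exp_nonneg _)]
    exact add_le_add hside1 hside2
  refine le_trans (ENNReal.toReal_le_of_le_ofReal (by positivity) hbound) ?_
  have harg : -(x ^ 2 * (Ncount q t : ℝ)) / (2 * M.σ ^ 2) ≤
      -(x ^ 2 * (Ncount q t : ℝ)) / (4 * M.σ ^ 2) := by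
    rw [div_le_div_iff₀ (by positivity) (by positivity)]
    nlinarith [mul_nonneg (sq_nonneg x) hN0, hσ2]
  have := Real.exp_le_exp.mpr harg
  linarith

end OneArmedBandit
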